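/- Let 0 < α < 1, let E be a real Hilbert space, (e_i)_{i∈ℕ} an orthonormal family in E, and c : ℕ → ℝ with the squared sequence nonincreasing ((c (i+1))² ≤ (c i)² for all i), Σ'_i ((c i)²)^α < ∞ (summable), and Σ'_i (c i)² < ∞ (summable). Let K ≥ 1 be a natural number with a := Σ_{i<K} (c i)² > 0. Set O = Σ'_{i∈ℕ} c_i • e_i and Ô = (‖O‖/√a) • Σ_{i<K} c_i • e_i. Then ‖O − Ô‖ ≤ √(2α/(1−α)) · exp( ((1−α)/(2α)) · (S^α(c) − log K) ). -/

import Mathlib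

/-- Operator Stabilizer Rényi entropy of a (countable) family of real Pauli coefficients. -/
noncomputable def OSE (α : ℝ) (c : ℕ → ℝ) : ℝ :=
  (1 / (1 - α)) * Real.log (∑' i, ((c i) ^ 2) ^ α)

private lemma mvt_step' (q : ℝ) (hq : 0 < q) (m : ℝ) (hm : 1 ≤ m) :
    q * (m + 1) ^ (-q - 1) ≤ m ^ (-q) - (m + 1) ^ (-q) := by
  obtain ⟨ξ, hξ, hslope⟩ := exists_hasDerivAt_eq_slope (fun x => x ^ (-q))
    (fun x => -q * x ^ (-q - 1)) (by linarith : m < m + 1)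
    (fun x hx => (Real.continuousAt_rpow_const x (-q)
      (Or.inl (by nlinarith [hx.1] : x ≠ 0))).continuousWithinAt)
    (fun x hx => by
      have hx0 : x ≠ 0 := by nlinarith [hx.1]
      simpa using Real.hasDerivAt_rpow_const (p := -q) (Or.inl hx0))
  have h1 : (m + 1) ^ (-q) - m ^ (-q) = -q * ξ ^ (-q - 1) := by
    rw [hslope]; ring
  have hξpos : (0:ℝ) < ξ := by have := hξ.1; linarith
  have h2 : (m + 1) ^ (-q - 1) ≤ ξ ^ (-q - 1) :=
    Real.rpow_le_rpow_of_nonpos hξpos (le_of_lt hξ.2) (by linarith)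
  nlinarith [h2, hq]

private lemma tail_bound' (α : ℝ) (hα0 : 0 < α) (hα1 : α < 1) (c : ℕ → ℝ)
    (hmono : ∀ i, (c (i + 1)) ^ 2 ≤ (c i) ^ 2)
    (hsumα : Summable fun i => ((c i) ^ 2) ^ α)
    (K : ℕ) (hK : 1 ≤ K) :
    ∑' i, (c (K + i)) ^ 2 ≤
      (α / (1 - α)) * (∑' i, ((c i) ^ 2) ^ α) ^ (1 / α) * (K : ℝ) ^ (-((1 - α) / α)) := by
  set M := ∑' i, ((c i) ^ 2) ^ α with hMdef
  have hM0 : 0 ≤ M := tsum_nonneg fun i => Real.rpow_nonneg (sq_nonneg _) _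
  have hA : Antitone fun i => (c i) ^ 2 := antitone_nat_of_succ_le hmono
  set q : ℝ := (1 - α) / α with hqdef
  have hq : 0 < q := div_pos (by linarith) hα0
  have hqp : q + 1 = 1 / α := by rw [hqdef, div_add_one hα0.ne']; ring
  have hpt : ∀ n : ℕ, (c n) ^ 2 ≤ M ^ (1 / α) * ((n : ℝ) + 1) ^ (-(1 / α)) := by
    intro n
    have h1 : ((n : ℝ) + 1) * ((c n) ^ 2) ^ α ≤ M := by
      calc ((n : ℝ) + 1) * ((c n) ^ 2) ^ α
          = ∑ _j ∈ Finset.range (n + 1), ((c n) ^ 2) ^ α := by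
            rw [Finset.sum_const, Finset.card_range, nsmul_eq_mul]; push_cast; ring
        _ ≤ ∑ j ∈ Finset.range (n + 1), ((c j) ^ 2) ^ α := by
            refine Finset.sum_le_sum fun j hj => ?_
            exact Real.rpow_le_rpow (sq_nonneg _)
              (hA (Nat.lt_succ_iff.mp (Finset.mem_range.mp hj))) hα0.le
        _ ≤ M := Summable.sum_le_tsum _ (fun i _ => Real.rpow_nonneg (sq_nonneg _) _) hsumα
    have h2 : ((c n) ^ 2) ^ α ≤ M / ((n : ℝ) + 1) := by
      rw [le_div_iff₀ (by positivity)]; linarith [h1]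
    have h3 : (((c n) ^ 2) ^ α) ^ (1 / α) = (c n) ^ 2 := by
      rw [← Real.rpow_mul (sq_nonneg _), mul_one_div_cancel hα0.ne', Real.rpow_one]
    calc (c n) ^ 2 = (((c n) ^ 2) ^ α) ^ (1 / α) := h3.symm
      _ ≤ (M / ((n : ℝ) + 1)) ^ (1 / α) :=
          Real.rpow_le_rpow (Real.rpow_nonneg (sq_nonneg _) _) h2 (by positivity)
      _ = M ^ (1 / α) * ((n : ℝ) + 1) ^ (-(1 / α)) := by
          rw [Real.div_rpow hM0 (by positivity), Real.rpow_neg (by positivity), div_eq_mul_inv]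
  have hpartial : ∀ N : ℕ, ∑ i ∈ Finset.range N, (c (K + i)) ^ 2 ≤
      (α / (1 - α)) * M ^ (1 / α) * (K : ℝ) ^ (-q) := by
    intro N
    have hK1 : (1 : ℝ) ≤ (K : ℝ) := by exact_mod_cast hK
    have step1 : ∑ i ∈ Finset.range N, (c (K + i)) ^ 2 ≤
        M ^ (1 / α) * ∑ i ∈ Finset.range N, ((K : ℝ) + i + 1) ^ (-q - 1) := by
      rw [Finset.mul_sum]
      refine Finset.sum_le_sum fun i _ => ?_
      have h := hpt (K + i)
      have hcast : ((K + i : ℕ) : ℝ) + 1 = (K : ℝ) + i + 1 := by push_cast; ring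
      rw [hcast] at h
      have hexp : -(1 / α) = -q - 1 := by rw [← hqp]; ring
      rw [hexp] at h
      exact h
    have step2 : ∑ i ∈ Finset.range N, ((K : ℝ) + i + 1) ^ (-q - 1) ≤ (K : ℝ) ^ (-q) / q := by
      have htel : q * ∑ i ∈ Finset.range N, ((K : ℝ) + i + 1) ^ (-q - 1) ≤ (K : ℝ) ^ (-q) := by
        rw [Finset.mul_sum]
        calc ∑ i ∈ Finset.range N, q * ((K : ℝ) + i + 1) ^ (-q - 1)
            ≤ ∑ i ∈ Finset.range N,
                (((K : ℝ) + i) ^ (-q) - ((K : ℝ) + ((i + 1 : ℕ) : ℝ)) ^ (-q)) := by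
              refine Finset.sum_le_sum fun i _ => ?_
              have h := mvt_step' q hq ((K : ℝ) + i)
                (by linarith [hK1, Nat.cast_nonneg (α := ℝ) i])
              have h' : (K : ℝ) + ((i + 1 : ℕ) : ℝ) = (K : ℝ) + i + 1 := by push_cast; ring
              rw [h']
              exact h
          _ = ((K : ℝ) + ((0:ℕ):ℝ)) ^ (-q) - ((K : ℝ) + ((N:ℕ):ℝ)) ^ (-q) :=
              Finset.sum_range_sub' (fun i : ℕ => ((K : ℝ) + i) ^ (-q)) N
          _ ≤ (K : ℝ) ^ (-q) := by
              simp only [Nat.cast_zero, add_zero]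
              have : (0:ℝ) ≤ ((K : ℝ) + (N:ℕ)) ^ (-q) := Real.rpow_nonneg (by positivity) _
              linarith
      rw [le_div_iff₀ hq]
      linarith [htel]
    have hMp : 0 ≤ M ^ (1 / α) := Real.rpow_nonneg hM0 _
    calc ∑ i ∈ Finset.range N, (c (K + i)) ^ 2
        ≤ M ^ (1 / α) * ((K : ℝ) ^ (-q) / q) := step1.trans (by gcongr)
      _ = (α / (1 - α)) * M ^ (1 / α) * (K : ℝ) ^ (-q) := by
          rw [hqdef]; field_simp
  exact Real.tsum_le_of_sum_range_le (fun n => sq_nonneg _) hpartial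

/-- Combined Top-`K` truncation error bound in terms of the OSE:
`‖O - Ô‖ ≤ √(2α/(1-α)) · exp( ((1-α)/(2α)) (Sᵅ(c) - log K) )`. -/
theorem truncation_error_le_entropy {E : Type*} [NormedAddCommGroup E]
    [InnerProductSpace ℝ E] [CompleteSpace E]
    (α : ℝ) (hα0 : 0 < α) (hα1 : α < 1)
    (e : ℕ → E) (he : Orthonormal ℝ e)
    (c : ℕ → ℝ) (hmono : ∀ i, (c (i + 1)) ^ 2 ≤ (c i) ^ 2)
    (hsumα : Summable fun i => ((c i) ^ 2) ^ α)
    (hsum : Summable fun i => (c i) ^ 2)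
    (K : ℕ) (hK : 1 ≤ K) (ha : 0 < ∑ i ∈ Finset.range K, (c i) ^ 2) :
    ‖(∑' i, c i • e i) -
        (‖∑' i, c i • e i‖ / Real.sqrt (∑ i ∈ Finset.range K, (c i) ^ 2)) •
          ∑ i ∈ Finset.range K, c i • e i‖ ≤
      Real.sqrt (2 * α / (1 - α)) *
        Real.exp (((1 - α) / (2 * α)) * (OSE α c - Real.log K)) := by
  classical
  set a := ∑ i ∈ Finset.range K, (c i) ^ 2 with hadef
  set S := ∑' i, (c i) ^ 2 with hSdef
  set M := ∑' i, ((c i) ^ 2) ^ α with hMdef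
  have hα1' : (0:ℝ) < 1 - α := by linarith
  -- positivity of M
  have hK1 : (1 : ℝ) ≤ (K : ℝ) := by exact_mod_cast hK
  have hA : Antitone fun i => (c i) ^ 2 := antitone_nat_of_succ_le hmono
  have hc0 : 0 < (c 0) ^ 2 := by
    have h1 : a ≤ (K : ℝ) * (c 0) ^ 2 := by
      rw [hadef]
      calc ∑ i ∈ Finset.range K, (c i) ^ 2 ≤ ∑ _i ∈ Finset.range K, (c 0) ^ 2 :=
            Finset.sum_le_sum fun i _ => hA (Nat.zero_le i)
        _ = (K : ℝ) * (c 0) ^ 2 := by rw [Finset.sum_const, Finset.card_range, nsmul_eq_mul]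
    nlinarith [sq_nonneg (c 0), ha, hK1]
  have hMpos : 0 < M :=
    lt_of_lt_of_le (Real.rpow_pos_of_pos hc0 α)
      (Summable.le_tsum hsumα 0 fun i _ => Real.rpow_nonneg (sq_nonneg _) _)
  -- summability / Hilbert space setup
  have hsml : Summable fun i => c i • e i := by
    have h := (he.orthogonalFamily.summable_iff_norm_sq_summable c).mpr
      (by simpa [Real.norm_eq_abs, sq_abs] using hsum)
    simpa [LinearIsometry.toSpanSingleton_apply] using h
  set O := ∑' i, c i • e i with hOdef
  have hO : HasSum (fun i => c i • e i) O := hsml.hasSum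
  set P := ∑ i ∈ Finset.range K, c i • e i with hPdef
  have hee : ∀ i j, (inner ℝ (e i) (e j) : ℝ) = if i = j then 1 else 0 :=
    orthonormal_iff_ite.mp he
  have hPe : ∀ i, (inner ℝ P (e i) : ℝ) = if i ∈ Finset.range K then c i else 0 := by
    intro i
    rw [hPdef, sum_inner]
    simp only [real_inner_smul_left, hee]
    simp [Finset.sum_ite_eq, mul_ite]
  have hPO : (inner ℝ P O : ℝ) = a := by
    have h1 : HasSum (fun i => (inner ℝ P (c i • e i) : ℝ)) (inner ℝ P O : ℝ) :=
      (innerSL ℝ P).hasSum hO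
    have h2 : (fun i => (inner ℝ P (c i • e i) : ℝ)) =
        fun i => if i ∈ Finset.range K then (c i) ^ 2 else 0 := by
      funext i
      rw [real_inner_smul_right, hPe i]
      split_ifs <;> ring
    rw [h2] at h1
    have h3 : HasSum (fun i => if i ∈ Finset.range K then (c i) ^ 2 else 0)
        (∑ i ∈ Finset.range K, if i ∈ Finset.range K then (c i) ^ 2 else 0) :=
      hasSum_sum_of_ne_finset_zero (fun b hb => if_neg hb)
    have h4 : (∑ i ∈ Finset.range K, if i ∈ Finset.range K then (c i) ^ 2 else 0) = a := by
      rw [hadef]; exact Finset.sum_congr rfl fun i hi => if_pos hi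
    rw [h4] at h3
    exact h1.unique h3
  have hP2 : ‖P‖ ^ 2 = a := by
    have h := he.orthogonalFamily.norm_sum c (Finset.range K)
    simpa [LinearIsometry.toSpanSingleton_apply, Real.norm_eq_abs, sq_abs] using h
  have hOle : ‖O‖ ≤ Real.sqrt S := by
    refine le_of_tendsto ((continuous_norm.tendsto O).comp hO.tendsto_sum_nat)
      (Filter.Eventually.of_forall fun n => ?_)
    have h1 : ‖∑ i ∈ Finset.range n, c i • e i‖ ^ 2 = ∑ i ∈ Finset.range n, (c i) ^ 2 := by
      have h := he.orthogonalFamily.norm_sum c (Finset.range n)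
      simpa [LinearIsometry.toSpanSingleton_apply, Real.norm_eq_abs, sq_abs] using h
    have h2 : ∑ i ∈ Finset.range n, (c i) ^ 2 ≤ S :=
      Summable.sum_le_tsum _ (fun i _ => sq_nonneg _) hsum
    calc ‖∑ i ∈ Finset.range n, c i • e i‖
        = Real.sqrt (‖∑ i ∈ Finset.range n, c i • e i‖ ^ 2) :=
          (Real.sqrt_sq (norm_nonneg _)).symm
      _ ≤ Real.sqrt S := by rw [h1]; exact Real.sqrt_le_sqrt h2
  set r := ‖O‖ / Real.sqrt a with hrdef
  have hsa : Real.sqrt a * Real.sqrt a = a := Real.mul_self_sqrt ha.le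
  have hsapos : 0 < Real.sqrt a := Real.sqrt_pos.mpr ha
  have hnorm2 : ‖O - r • P‖ ^ 2 = 2 * ‖O‖ ^ 2 - 2 * ‖O‖ * Real.sqrt a := by
    rw [@norm_sub_sq ℝ, real_inner_smul_right, real_inner_comm, hPO, norm_smul, mul_pow,
      Real.norm_eq_abs, sq_abs, hP2, hrdef]
    simp only [RCLike.re_to_real]
    field_simp
    linear_combination (2 * ‖O‖ * Real.sqrt a - ‖O‖ ^ 2) * hsa
  -- key: ‖O - r • P‖² ≤ 2 (S - a)
  have haS : a ≤ S := by rw [hadef, hSdef]; exact Summable.sum_le_tsum _ (fun i _ => sq_nonneg _) hsum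
  have hS0 : 0 ≤ S := le_trans ha.le haS
  have hsS : Real.sqrt S * Real.sqrt S = S := Real.mul_self_sqrt hS0
  have hsaS : Real.sqrt a ≤ Real.sqrt S := Real.sqrt_le_sqrt haS
  have hkey : ‖O - r • P‖ ^ 2 ≤ 2 * (S - a) := by
    rw [hnorm2]
    nlinarith [mul_nonneg (sub_nonneg.2 hOle)
        (by linarith [norm_nonneg O, hsaS] : (0:ℝ) ≤ ‖O‖ + Real.sqrt S - Real.sqrt a),
      mul_nonneg (sub_nonneg.2 hsaS) hsapos.le, hsa, hsS]
  -- tail identity and bound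
  have htail_eq : S - a = ∑' i, (c (K + i)) ^ 2 := by
    have h := Summable.sum_add_tsum_nat_add (f := fun i => (c i) ^ 2) K hsum
    have h' : ∑' i, (c (i + K)) ^ 2 = ∑' i, (c (K + i)) ^ 2 := by
      congr 1; funext i; rw [Nat.add_comm]
    rw [hSdef, hadef, ← h, h']; ring
  have htail : S - a ≤ (α / (1 - α)) * M ^ (1 / α) * (K : ℝ) ^ (-((1 - α) / α)) := by
    rw [htail_eq]
    exact tail_bound' α hα0 hα1 c hmono hsumα K hK
  -- RHS computation
  set R := Real.sqrt (2 * α / (1 - α)) *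
    Real.exp (((1 - α) / (2 * α)) * (OSE α c - Real.log K)) with hRdef
  have hR0 : 0 ≤ R := by positivity
  have hR2 : R ^ 2 = (2 * α / (1 - α)) * M ^ (1 / α) * (K : ℝ) ^ (-((1 - α) / α)) := by
    rw [hRdef, mul_pow, Real.sq_sqrt (by positivity), ← Real.exp_nat_mul]
    have hMrw : M ^ (1 / α) = Real.exp (Real.log M * (1 / α)) := by
      rw [Real.rpow_def_of_pos hMpos]
    have hKrw : (K : ℝ) ^ (-((1 - α) / α)) = Real.exp (Real.log K * (-((1 - α) / α))) := by
      rw [Real.rpow_def_of_pos (by linarith : (0:ℝ) < (K:ℝ))]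
    rw [hMrw, hKrw, mul_assoc, ← Real.exp_add]
    congr 1
    rw [OSE, ← hMdef]
    push_cast
    field_simp
    ring
  -- conclude
  have hfinal : ‖O - r • P‖ ^ 2 ≤ R ^ 2 := by
    rw [hR2]
    calc ‖O - r • P‖ ^ 2 ≤ 2 * (S - a) := hkey
      _ ≤ 2 * ((α / (1 - α)) * M ^ (1 / α) * (K : ℝ) ^ (-((1 - α) / α))) := by linarith
      _ = (2 * α / (1 - α)) * M ^ (1 / α) * (K : ℝ) ^ (-((1 - α) / α)) := by ring
  calc ‖O - r • P‖ = Real.sqrt (‖O - r • P‖ ^ 2) := (Real.sqrt_sq (norm_nonneg _)).symm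
    _ ≤ Real.sqrt (R ^ 2) := Real.sqrt_le_sqrt hfinal
    _ = R := Real.sqrt_sq hR0
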